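/- Let D be a pretriangulated (stable) category, C ⊆ D a full triangulated subcategory, and E ⊆ C a full triangulated subcategory of C (hence also of D). Then the induced functor on Verdier quotients C/E → D/E is fully faithful. -/

import Mathlib

open CategoryTheory CategoryTheory.Limits CategoryTheory.Pretriangulated

namespace CategoryTheory.Triangulated

/-- The structure `Triangulated.Subcategory` of the older Mathlib (removed since):
a triangulated subcategory, given by a predicate `P` containing a zero object,
stable under shifts and closed under extensions up to isomorphism. -/
structure Subcategory (C : Type*) [Category C] [HasZeroObject C] [HasShift C ℤ]
    [Preadditive C] [∀ n : ℤ, (shiftFunctor C n).Additive] [Pretriangulated C] where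
  P : C → Prop
  zero' : ∃ (Z : C) (_ : IsZero Z), P Z
  shift (X : C) (n : ℤ) : P X → P (X⟦n⟧)
  ext₂' (T : Triangle C) (_ : T ∈ distTriang C) : P T.obj₁ → P T.obj₃ →
    ∃ (Y : C) (_ : P Y), Nonempty (T.obj₂ ≅ Y)

/-- The class of morphisms whose cone satisfies `S.P` (old `Subcategory.W`). -/
def Subcategory.W {C : Type*} [Category C] [HasZeroObject C] [HasShift C ℤ]
    [Preadditive C] [∀ n : ℤ, (shiftFunctor C n).Additive] [Pretriangulated C]
    (S : Subcategory C) : MorphismProperty C :=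
  fun X Y f => ∃ (Z : C) (g : Y ⟶ Z) (h : Z ⟶ X⟦(1 : ℤ)⟧)
    (_ : Triangle.mk f g h ∈ distTriang C), S.P Z

end CategoryTheory.Triangulated

namespace CategoryTheory.Triangulated

section Helpers

variable {C : Type*} [Category C] [HasZeroObject C] [HasShift C ℤ]
    [Preadditive C] [∀ n : ℤ, (shiftFunctor C n).Additive] [Pretriangulated C]
    (S : Subcategory C)

lemma Subcategory.W.mk {T : Triangle C} (hT : T ∈ distTriang C) (h : S.P T.obj₃) :
    S.W T.mor₁ :=
  ⟨_, _, _, hT, h⟩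

lemma Subcategory.W.mk' {T : Triangle C} (hT : T ∈ distTriang C) (h : S.P T.obj₁) :
    S.W T.mor₂ :=
  ⟨_, _, _, rot_of_distTriang _ hT, S.shift _ _ h⟩

instance Subcategory.W_respectsIso : S.W.RespectsIso :=
  MorphismProperty.RespectsIso.of_respects_arrow_iso _ (by
    rintro A B e ⟨Z, g, h, H, mem⟩
    refine ⟨Z, e.inv.right ≫ g, h ≫ (shiftFunctor C (1 : ℤ)).map
      e.hom.left, isomorphic_distinguished _ H _ ?_, mem⟩
    refine Triangle.isoMk _ _ (Arrow.leftFunc.mapIso e.symm) (Arrow.rightFunc.mapIso e.symm)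
      (Iso.refl _) ?_ ?_ ?_
    · exact (Arrow.w e.inv).symm
    · exact Category.comp_id _
    · change (h ≫ _) ≫ (shiftFunctor C (1 : ℤ)).map e.inv.left = 𝟙 Z ≫ h
      rw [Category.assoc, ← Functor.map_comp, Arrow.hom_inv_id_left, Functor.map_id,
        Category.comp_id, Category.id_comp])

end Helpers

end CategoryTheory.Triangulated

namespace VerdierFF

open CategoryTheory.Category

section Mclo

variable {A : Type*} [Category A]

/-- The multiplicative closure of a class of morphisms. -/
inductive mclo (W : MorphismProperty A) : MorphismProperty A
  | of {X Y : A} (f : X ⟶ Y) (hf : W f) : mclo W f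
  | id (X : A) : mclo W (𝟙 X)
  | comp {X Y Z : A} {f : X ⟶ Y} {g : Y ⟶ Z} (hf : mclo W f) (hg : mclo W g) :
      mclo W (f ≫ g)

instance (W : MorphismProperty A) : (mclo W).IsMultiplicative where
  id_mem X := mclo.id X
  comp_mem _ _ hf hg := mclo.comp hf hg

lemma mclo_le (W : MorphismProperty A) : W ≤ mclo W := fun _ _ f hf => mclo.of f hf

lemma mclo_isInvertedBy {B : Type*} [Category B] {W : MorphismProperty A} {L : A ⥤ B}
    (h : W.IsInvertedBy L) : (mclo W).IsInvertedBy L := by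
  intro X Y f hf
  induction hf with
  | of f hf => exact h f hf
  | id X => rw [L.map_id]; infer_instance
  | comp hf hg ihf ihg =>
    rw [L.map_comp]
    have := ihf
    have := ihg
    infer_instance

lemma isLocalization_of_le {B : Type*} [Category B] (L : A ⥤ B) (W W' : MorphismProperty A)
    [L.IsLocalization W] (h : W ≤ W') (hW' : W'.IsInvertedBy L) : L.IsLocalization W' :=
  Functor.IsLocalization.of_equivalence_source L W L W' (CategoryTheory.Equivalence.refl (C := A))
    (fun _ _ f hf => MorphismProperty.le_isoClosure W' _ (h _ hf)) hW' (Functor.leftUnitor L)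

end Mclo

section Tri

variable {A : Type*} [Category A] [Preadditive A] [HasZeroObject A] [HasShift A ℤ]
  [∀ n : ℤ, (shiftFunctor A n).Additive] [Pretriangulated A]
  (S : Triangulated.Subcategory A)

/-- The left Ore condition for `S.W`, proved without assuming `IsTriangulated`. -/
lemma ore {X Y X' : A} (s : X' ⟶ X) (hs : S.W s) (f : X' ⟶ Y) :
    ∃ (Y' : A) (f' : X ⟶ Y') (t : Y ⟶ Y'), S.W t ∧ f ≫ t = s ≫ f' := by
  obtain ⟨Z, g, h, H, mem⟩ := hs
  obtain ⟨Y', s', f', mem'⟩ := distinguished_cocone_triangle₂ (h ≫ f⟦(1 : ℤ)⟧')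
  obtain ⟨b, ⟨hb₁, _⟩⟩ := complete_distinguished_triangle_morphism₂ _ _ H mem' f (𝟙 Z) (by exact (Category.id_comp _).symm)
  exact ⟨Y', b, s', ⟨Z, f', _, mem', mem⟩, hb₁.symm⟩

/-- The left cancellability condition for `S.W`, proved without assuming `IsTriangulated`. -/
lemma ext_ {X' X Y : A} (f₁ f₂ : X ⟶ Y) (s : X' ⟶ X) (hs : S.W s) (hf : s ≫ f₁ = s ≫ f₂) :
    ∃ (Y' : A) (t : Y ⟶ Y'), S.W t ∧ f₁ ≫ t = f₂ ≫ t := by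
  obtain ⟨Z, g, h, H, mem⟩ := hs
  have hf₂ : s ≫ (f₁ - f₂) = 0 := by rw [Preadditive.comp_sub, hf, sub_self]
  obtain ⟨q, hq⟩ := Triangle.yoneda_exact₂ _ H _ hf₂
  obtain ⟨Y', r, t, mem'⟩ := distinguished_cocone_triangle q
  refine ⟨Y', r, ⟨_, _, _, rot_of_distTriang _ mem', S.shift _ _ mem⟩, ?_⟩
  have eq := comp_distTriang_mor_zero₁₂ _ mem'
  change f₁ - f₂ = g ≫ q at hq
  change q ≫ r = 0 at eq
  rw [← sub_eq_zero, ← Preadditive.sub_comp, hq]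
  exact (Category.assoc _ _ _).trans ((congrArg (fun x => _ ≫ x) eq).trans comp_zero)

lemma mclo_ore {X X' : A} (s : X' ⟶ X) (hs : mclo S.W s) :
    ∀ {Y : A} (f : X' ⟶ Y), ∃ (Y' : A) (f' : X ⟶ Y') (t : Y ⟶ Y'),
      mclo S.W t ∧ f ≫ t = s ≫ f' := by
  induction hs with
  | of s hs =>
    intro Y f
    obtain ⟨Y', f', t, ht, fac⟩ := ore S s hs f
    exact ⟨Y', f', t, mclo.of t ht, fac⟩
  | id X => exact fun {Y} f => ⟨Y, f, 𝟙 Y, mclo.id Y, by simp⟩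
  | comp hf hg ihf ihg =>
    intro Y φ
    obtain ⟨Y₁, a₁, t₁, ht₁, fac₁⟩ := ihf φ
    obtain ⟨Y₂, a₂, t₂, ht₂, fac₂⟩ := ihg a₁
    refine ⟨Y₂, a₂, t₁ ≫ t₂, mclo.comp ht₁ ht₂, ?_⟩
    rw [← assoc, fac₁, assoc, fac₂, ← assoc]

lemma mclo_ext {X' X : A} (s : X' ⟶ X) (hs : mclo S.W s) :
    ∀ {Y : A} (f₁ f₂ : X ⟶ Y), s ≫ f₁ = s ≫ f₂ →
      ∃ (Y' : A) (t : Y ⟶ Y') (_ : mclo S.W t), f₁ ≫ t = f₂ ≫ t := by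
  induction hs with
  | of s hs =>
    intro Y f₁ f₂ h
    obtain ⟨Y', t, ht, fac⟩ := ext_ S f₁ f₂ s hs h
    exact ⟨Y', t, mclo.of t ht, fac⟩
  | id X => exact fun {Y} f₁ f₂ h => ⟨Y, 𝟙 Y, mclo.id Y, by simpa using h⟩

  | comp hf hg ihf ihg =>
    intro Y f₁ f₂ h
    obtain ⟨Y₁, t₁, ht₁, fac₁⟩ := ihf _ _ (by simpa only [assoc] using h)
    obtain ⟨Y₂, t₂, ht₂, fac₂⟩ := ihg (f₁ ≫ t₁) (f₂ ≫ t₁)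
      (by simpa only [assoc] using fac₁)
    exact ⟨Y₂, t₁ ≫ t₂, mclo.comp ht₁ ht₂, by simpa only [assoc] using fac₂⟩

instance : (mclo S.W).HasLeftCalculusOfFractions where
  exists_leftFraction X Y φ := by
    obtain ⟨Y', f', t, ht, fac⟩ := mclo_ore S φ.s φ.hs φ.f
    exact ⟨⟨f', t, ht⟩, fac⟩
  ext X' X Y f₁ f₂ s hs h := mclo_ext S s hs f₁ f₂ h

end Tri

section Conj

variable {C D C' D' : Type*} [Category C] [Category D] [Category C'] [Category D']

lemma frac_extend (L : C ⥤ C') {X Y Z M : C} (a : X ⟶ Z) (s : Y ⟶ Z) (c : Z ⟶ M)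
    [IsIso (L.map s)] [IsIso (L.map (s ≫ c))] :
    L.map a ≫ inv (L.map s) = L.map (a ≫ c) ≫ inv (L.map (s ≫ c)) := by
  rw [← cancel_mono (L.map (s ≫ c))]
  simp only [Category.assoc, IsIso.inv_hom_id, Category.comp_id, L.map_comp,
    IsIso.inv_hom_id_assoc]

lemma conj_eq (ι : C ⥤ D) (L₁ : C ⥤ C') (L₂ : D ⥤ D') (F : C' ⥤ D')
    (e : L₁ ⋙ F ≅ ι ⋙ L₂) {X Y Y' : C} (p : X ⟶ Y') (q : Y ⟶ Y')
    [IsIso (L₁.map q)] [IsIso (L₂.map (ι.map q))] :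
    e.inv.app X ≫ F.map (L₁.map p ≫ inv (L₁.map q)) ≫ e.hom.app Y
      = L₂.map (ι.map p) ≫ inv (L₂.map (ι.map q)) := by
  have hp := e.hom.naturality p
  have hq := e.hom.naturality q
  dsimp at hp hq
  rw [F.map_comp]
  simp only [Functor.map_inv, Category.assoc]
  have h3 : inv (F.map (L₁.map q)) ≫ e.hom.app Y = e.hom.app Y' ≫ inv (L₂.map (ι.map q)) := by
    rw [IsIso.inv_comp_eq, ← Category.assoc, hq, Category.assoc, IsIso.hom_inv_id,
      Category.comp_id]
  rw [h3, reassoc_of% hp]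
  simp

end Conj

section Main

variable {C D C' D' : Type*} [Category C] [Category D] [Category C'] [Category D']
    [Preadditive C] [HasZeroObject C] [HasShift C ℤ]
    [∀ n : ℤ, (shiftFunctor C n).Additive] [Pretriangulated C]
    [Preadditive D] [HasZeroObject D] [HasShift D ℤ]
    [∀ n : ℤ, (shiftFunctor D n).Additive] [Pretriangulated D]
    (ι : C ⥤ D) [ι.Full] [ι.Faithful] [ι.CommShift ℤ] [ι.IsTriangulated]
    (SE : Triangulated.Subcategory C) (SE' : Triangulated.Subcategory D)

lemma W_map (h₁ : ∀ X : C, SE.P X → SE'.P (ι.obj X)) {X Y : C} (t : X ⟶ Y) (ht : SE.W t) :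
    SE'.W (ι.map t) := by
  obtain ⟨Z, g, h, H, mem⟩ := ht
  exact Triangulated.Subcategory.W.mk SE' (ι.map_distinguished _ H) (h₁ Z mem)

lemma mclo_map (h₁ : ∀ X : C, SE.P X → SE'.P (ι.obj X)) {X Y : C} (t : X ⟶ Y)
    (ht : mclo SE.W t) : mclo SE'.W (ι.map t) := by
  induction ht with
  | of f hf => exact mclo.of _ (W_map ι SE SE' h₁ f hf)
  | id X => rw [ι.map_id]; exact mclo.id _
  | comp hf hg ihf ihg => rw [ι.map_comp]; exact mclo.comp ihf ihg

/-- Key descent lemma: any morphism in the multiplicative closure of `SE'.W` out of an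
object in the image of `ι` is, up to isomorphism, the image of a morphism in the
multiplicative closure of `SE.W`. -/
lemma descent (h₂ : ∀ Y : D, SE'.P Y → ∃ X : C, SE.P X ∧ Nonempty (ι.obj X ≅ Y))
    {M Z : D} (s : M ⟶ Z) (hs : mclo SE'.W s) :
    ∀ {Y : C} (α : ι.obj Y ≅ M), ∃ (Y' : C) (t : Y ⟶ Y') (_ : mclo SE.W t)
      (iso : ι.obj Y' ≅ Z), ι.map t ≫ iso.hom = α.hom ≫ s := by
  induction hs with
  | of s hs =>
    intro Y α
    have hs' : SE'.W (α.hom ≫ s) :=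
      (MorphismProperty.cancel_left_of_respectsIso SE'.W α.hom s).2 hs
    obtain ⟨Z', g, hmap, H, mem⟩ := hs'
    obtain ⟨XE, hXE, ⟨eE⟩⟩ := h₂ Z' mem
    have H2 := inv_rot_of_distTriang _ H
    let T2 := (Triangle.mk (α.hom ≫ s) g hmap).invRotate
    let isoE : ι.obj (XE⟦(-1 : ℤ)⟧) ≅ Z'⟦(-1 : ℤ)⟧ :=
      (ι.commShiftIso (-1 : ℤ)).app XE ≪≫ (shiftFunctor D (-1 : ℤ)).mapIso eE
    let u : XE⟦(-1 : ℤ)⟧ ⟶ Y := ι.preimage (isoE.hom ≫ T2.mor₁)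
    obtain ⟨Y', t, w, HT⟩ := distinguished_cocone_triangle u
    have hT1 := ι.map_distinguished _ HT
    let harrow : Arrow.mk ((ι.mapTriangle.obj (Triangle.mk u t w)).mor₁)
        ≅ Arrow.mk T2.mor₁ :=
      Arrow.isoMk isoE (Iso.refl _) (by
        exact ((Category.comp_id _).trans (ι.map_preimage _)).symm)
    obtain ⟨e', he₁, he₂⟩ := exists_iso_of_arrow_iso _ _ hT1 H2 harrow
    refine ⟨Y', t, mclo.of t (Triangulated.Subcategory.W.mk' SE HT (SE.shift _ _ hXE)),
      Triangle.π₃.mapIso e', ?_⟩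
    have hc := e'.hom.comm₂
    rw [he₂] at hc
    exact hc.trans (Category.id_comp _)
  | id M => exact fun {Y} α => ⟨Y, 𝟙 Y, mclo.id Y, α, by simp⟩
  | comp hs₁ hs₂ ih₁ ih₂ =>
    intro Y α
    obtain ⟨Y₁, t₁, ht₁, iso₁, fac₁⟩ := ih₁ α
    obtain ⟨Y₂, t₂, ht₂, iso₂, fac₂⟩ := ih₂ iso₁
    refine ⟨Y₂, t₁ ≫ t₂, mclo.comp ht₁ ht₂, iso₂, ?_⟩
    rw [ι.map_comp, Category.assoc, fac₂, reassoc_of% fac₁]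

end Main

end VerdierFF

open VerdierFF

/-- Let `ι : C ⥤ D` be a fully faithful triangulated inclusion of triangulated
categories, `SE` a triangulated subcategory of `C` whose image is the triangulated
subcategory `SE'` of `D`. Then the functor induced on Verdier quotients
`C/E ⥤ D/E` (between localizations at the respective classes of morphisms with
cone in `E`) is fully faithful. -/
theorem verdier_quotient_fully_faithful
    {C D C' D' : Type*} [Category C] [Category D] [Category C'] [Category D']
    [Preadditive C] [HasZeroObject C] [HasShift C ℤ]
    [∀ n : ℤ, (shiftFunctor C n).Additive] [Pretriangulated C]
    [Preadditive D] [HasZeroObject D] [HasShift D ℤ]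
    [∀ n : ℤ, (shiftFunctor D n).Additive] [Pretriangulated D]
    (ι : C ⥤ D) [ι.Full] [ι.Faithful] [ι.CommShift ℤ] [ι.IsTriangulated]
    (SE : Triangulated.Subcategory C) (SE' : Triangulated.Subcategory D)
    (h₁ : ∀ X : C, SE.P X → SE'.P (ι.obj X))
    (h₂ : ∀ Y : D, SE'.P Y → ∃ X : C, SE.P X ∧ Nonempty (ι.obj X ≅ Y))
    (L₁ : C ⥤ C') [L₁.IsLocalization SE.W]
    (L₂ : D ⥤ D') [L₂.IsLocalization SE'.W]
    (F : C' ⥤ D') (e : L₁ ⋙ F ≅ ι ⋙ L₂) :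
    F.Full ∧ F.Faithful := by
  have hinv₁ : (mclo SE.W).IsInvertedBy L₁ :=
    mclo_isInvertedBy (Localization.inverts L₁ SE.W)
  have hinv₂ : (mclo SE'.W).IsInvertedBy L₂ :=
    mclo_isInvertedBy (Localization.inverts L₂ SE'.W)
  haveI : L₁.IsLocalization (mclo SE.W) :=
    isLocalization_of_le L₁ _ _ (mclo_le _) hinv₁
  haveI : L₂.IsLocalization (mclo SE'.W) :=
    isLocalization_of_le L₂ _ _ (mclo_le _) hinv₂
  -- fullness on objects in the image of `L₁`
  have key_full : ∀ (X Y : C) (h : F.obj (L₁.obj X) ⟶ F.obj (L₁.obj Y)),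
      ∃ f : L₁.obj X ⟶ L₁.obj Y, F.map f = h := by
    intro X Y h
    obtain ⟨φ, hφ⟩ := Localization.exists_leftFraction L₂ (mclo SE'.W)
      (e.inv.app X ≫ h ≫ e.hom.app Y)
    obtain ⟨Y', t, ht, iso, fac⟩ := descent ι SE SE' h₂ φ.s φ.hs (Iso.refl (ι.obj Y))
    rw [Iso.refl_hom, Category.id_comp] at fac
    haveI : IsIso (L₁.map t) := hinv₁ t ht
    haveI : IsIso (L₂.map (ι.map t)) := hinv₂ _ (mclo_map ι SE SE' h₁ t ht)
    haveI : IsIso (L₂.map φ.s) := hinv₂ _ φ.hs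
    refine ⟨L₁.map (ι.preimage (φ.f ≫ iso.inv)) ≫ inv (L₁.map t), ?_⟩
    have conj := conj_eq ι L₁ L₂ F e (ι.preimage (φ.f ≫ iso.inv)) t
    rw [ι.map_preimage] at conj
    have eq1 : e.inv.app X ≫ F.map (L₁.map (ι.preimage (φ.f ≫ iso.inv)) ≫ inv (L₁.map t))
        ≫ e.hom.app Y = e.inv.app X ≫ h ≫ e.hom.app Y := by
      rw [conj, hφ]
      rw [← cancel_mono (L₂.map φ.s), MorphismProperty.LeftFraction.map_comp_map_s]
      rw [← fac, L₂.map_comp, L₂.map_comp]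
      simp
    have eq2 := (cancel_epi (e.inv.app X)).1 eq1
    exact (cancel_mono (e.hom.app Y)).1 eq2
  -- faithfulness on objects in the image of `L₁`
  have key_faithful : ∀ (X Y : C) (f g : L₁.obj X ⟶ L₁.obj Y), F.map f = F.map g → f = g := by
    intro X Y f g hfg
    obtain ⟨φ, hφ⟩ := Localization.exists_leftFraction L₁ (mclo SE.W) f
    obtain ⟨ψ, hψ⟩ := Localization.exists_leftFraction L₁ (mclo SE.W) g
    obtain ⟨M, c, w, hw, fac⟩ := mclo_ore SE φ.s φ.hs ψ.s
    have hv : mclo SE.W (φ.s ≫ c) := fac ▸ mclo.comp ψ.hs hw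
    haveI : IsIso (L₁.map φ.s) := hinv₁ _ φ.hs
    haveI : IsIso (L₁.map ψ.s) := hinv₁ _ ψ.hs
    haveI : IsIso (L₁.map (φ.s ≫ c)) := hinv₁ _ hv
    haveI : IsIso (L₂.map (ι.map (φ.s ≫ c))) := hinv₂ _ (mclo_map ι SE SE' h₁ _ hv)
    have hf' : f = L₁.map (φ.f ≫ c) ≫ inv (L₁.map (φ.s ≫ c)) := by
      rw [← cancel_mono (L₁.map (φ.s ≫ c))]
      simp only [Category.assoc, IsIso.inv_hom_id, Category.comp_id]
      rw [hφ, L₁.map_comp, L₁.map_comp,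
        MorphismProperty.LeftFraction.map_comp_map_s_assoc]
    have hg' : g = L₁.map (ψ.f ≫ w) ≫ inv (L₁.map (φ.s ≫ c)) := by
      rw [← cancel_mono (L₁.map (φ.s ≫ c))]
      simp only [Category.assoc, IsIso.inv_hom_id, Category.comp_id]
      rw [hψ, ← fac, L₁.map_comp, L₁.map_comp,
        MorphismProperty.LeftFraction.map_comp_map_s_assoc]
    have E1 := conj_eq ι L₁ L₂ F e (φ.f ≫ c) (φ.s ≫ c)
    have E2 := conj_eq ι L₁ L₂ F e (ψ.f ≫ w) (φ.s ≫ c)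
    have eqD : L₂.map (ι.map (φ.f ≫ c)) = L₂.map (ι.map (ψ.f ≫ w)) := by
      have : L₂.map (ι.map (φ.f ≫ c)) ≫ inv (L₂.map (ι.map (φ.s ≫ c)))
          = L₂.map (ι.map (ψ.f ≫ w)) ≫ inv (L₂.map (ι.map (φ.s ≫ c))) := by
        rw [← E1, ← E2, ← hf', ← hg', hfg]
      exact (cancel_mono (inv (L₂.map (ι.map (φ.s ≫ c))))).1 this
    rw [MorphismProperty.map_eq_iff_postcomp L₂ (mclo SE'.W)] at eqD
    obtain ⟨Z₃, s₂, hs₂, eq3⟩ := eqD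
    obtain ⟨Y₃, r, hr, iso₃, fac₃⟩ := descent ι SE SE' h₂ s₂ hs₂ (Iso.refl _)
    rw [Iso.refl_hom, Category.id_comp] at fac₃
    rw [← fac₃] at eq3
    have eq4 : ι.map ((φ.f ≫ c) ≫ r) = ι.map ((ψ.f ≫ w) ≫ r) := by
      have := (cancel_mono iso₃.hom).1 (by simpa only [← Category.assoc] using eq3)
      simpa only [← ι.map_comp] using this
    have eq5 : (φ.f ≫ c) ≫ r = (ψ.f ≫ w) ≫ r := ι.map_injective eq4
    have eq6 : L₁.map (φ.f ≫ c) = L₁.map (ψ.f ≫ w) :=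
      (MorphismProperty.map_eq_iff_postcomp L₁ (mclo SE.W) _ _).2 ⟨Y₃, r, hr, eq5⟩
    rw [hf', hg', eq6]
  -- transfer to all objects using essential surjectivity of `L₁`
  haveI : L₁.EssSurj := Localization.essSurj L₁ SE.W
  constructor
  · constructor
    intro P Q h
    let X := L₁.objPreimage P
    let Y := L₁.objPreimage Q
    let iP : L₁.obj X ≅ P := L₁.objObjPreimageIso P
    let iQ : L₁.obj Y ≅ Q := L₁.objObjPreimageIso Q
    obtain ⟨f, hf⟩ := key_full X Y (F.map iP.hom ≫ h ≫ F.map iQ.inv)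
    refine ⟨iP.inv ≫ f ≫ iQ.hom, ?_⟩
    rw [F.map_comp, F.map_comp, hf]
    simp only [Category.assoc, ← F.map_comp]
    simp [← F.map_comp_assoc]
  · constructor
    intro P Q f g hfg
    let X := L₁.objPreimage P
    let Y := L₁.objPreimage Q
    let iP : L₁.obj X ≅ P := L₁.objObjPreimageIso P
    let iQ : L₁.obj Y ≅ Q := L₁.objObjPreimageIso Q
    have h5 : iP.hom ≫ f ≫ iQ.inv = iP.hom ≫ g ≫ iQ.inv := by
      apply key_faithful
      simp only [F.map_comp, hfg]
    have := (cancel_epi iP.hom).1 h5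
    exact (cancel_mono iQ.inv).1 this
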